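/- Let X¹, X², Y be random variables on a common probability space taking values in finite sets such that X¹ and X² are conditionally independent given Y (Markov chain X² ↔ Y ↔ X¹), and let Z = f(X¹) for a function f with I(Z;X²) = I(X¹;X²). Then I(Z;Y) = I(X¹;Y) − I(X¹;Y | X²) + I(Z;Y | X²). -/

import Mathlib

open MeasureTheory Real

/-- Shannon entropy `H(X)` of a random variable `X` taking values in a finite set,
under the measure `μ`. -/
noncomputable def Hent {Ω α : Type*} [MeasurableSpace Ω] [Fintype α]
    (μ : Measure Ω) (X : Ω → α) : ℝ :=
  -∑ x : α, (μ (X ⁻¹' {x})).toReal * Real.log (μ (X ⁻¹' {x})).toReal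

/-- Conditional entropy `H(X | Y)`. -/
noncomputable def condEnt {Ω α β : Type*} [MeasurableSpace Ω] [Fintype α] [Fintype β]
    (μ : Measure Ω) (X : Ω → α) (Y : Ω → β) : ℝ :=
  Hent μ (fun ω => (X ω, Y ω)) - Hent μ Y

/-- Mutual information `I(X;Y)`. -/
noncomputable def mutInfo {Ω α β : Type*} [MeasurableSpace Ω] [Fintype α] [Fintype β]
    (μ : Measure Ω) (X : Ω → α) (Y : Ω → β) : ℝ :=
  Hent μ X + Hent μ Y - Hent μ (fun ω => (X ω, Y ω))

/-- Conditional mutual information `I(X;Y | Z)`. -/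
noncomputable def condMutInfo {Ω α β γ : Type*} [MeasurableSpace Ω]
    [Fintype α] [Fintype β] [Fintype γ]
    (μ : Measure Ω) (X : Ω → α) (Y : Ω → β) (Z : Ω → γ) : ℝ :=
  Hent μ (fun ω => (X ω, Z ω)) + Hent μ (fun ω => (Y ω, Z ω))
    - Hent μ (fun ω => ((X ω, Y ω), Z ω)) - Hent μ Z

/-- Random variables `X` and `Y` (with values in finite/discrete sets) are conditionally
independent given `Z`: for all outcomes, `P(X = x, Y = y, Z = z) · P(Z = z)
= P(X = x, Z = z) · P(Y = y, Z = z)`.  For finitely-valued random variables this is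
equivalent to the usual almost-sure factorization of conditional probabilities. -/
def CondIndepFin {Ω α β γ : Type*} [MeasurableSpace Ω]
    (μ : Measure Ω) (X : Ω → α) (Y : Ω → β) (Z : Ω → γ) : Prop :=
  ∀ (x : α) (y : β) (z : γ),
    μ (X ⁻¹' {x} ∩ Y ⁻¹' {y} ∩ Z ⁻¹' {z}) * μ (Z ⁻¹' {z})
      = μ (X ⁻¹' {x} ∩ Z ⁻¹' {z}) * μ (Y ⁻¹' {y} ∩ Z ⁻¹' {z})

/-! ### Auxiliary lemmas -/

lemma Hent_map_equiv {Ω α β : Type*} [MeasurableSpace Ω] [Fintype α] [Fintype β]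
    (μ : Measure Ω) (X : Ω → α) (e : α ≃ β) :
    Hent μ (fun ω => e (X ω)) = Hent μ X := by
  unfold Hent
  congr 1
  rw [← Equiv.sum_comp e]
  refine Finset.sum_congr rfl fun a _ => ?_
  have : (fun ω => e (X ω)) ⁻¹' {e a} = X ⁻¹' {a} := by ext ω; simp
  rw [this]

lemma measure_fiber_sum {Ω α : Type*} [MeasurableSpace Ω] [MeasurableSpace α]
    [MeasurableSingletonClass α] [Fintype α]
    (μ : Measure Ω) (X : Ω → α) (hX : Measurable X) (S : Set Ω) (hS : MeasurableSet S)
    (T : Finset α) :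
    μ (X ⁻¹' (T : Set α) ∩ S) = ∑ a ∈ T, μ (X ⁻¹' {a} ∩ S) := by
  have hset : X ⁻¹' (T : Set α) ∩ S = ⋃ a ∈ T, X ⁻¹' {a} ∩ S := by
    ext ω; simp
  rw [hset, measure_biUnion_finset]
  · intro a _ b _ hab
    apply Set.disjoint_left.mpr
    rintro ω ⟨ha, _⟩ ⟨hb, _⟩
    exact hab (by simp at ha hb; rw [← ha, ← hb])
  · exact fun a _ => (hX (measurableSet_singleton a)).inter hS

lemma sum_log_identity {α β γ : Type*} [Fintype α] [Fintype β] [Fintype γ]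
    (p : α → β → γ → ℝ) (hp : ∀ x y z, 0 ≤ p x y z)
    (hm : ∀ x y z, p x y z * (∑ x', ∑ y', p x' y' z)
        = (∑ y', p x y' z) * (∑ x', p x' y z)) :
    (∑ x, ∑ y, ∑ z, p x y z * Real.log (p x y z))
      + ∑ z, (∑ x, ∑ y, p x y z) * Real.log (∑ x, ∑ y, p x y z)
    = (∑ x, ∑ z, (∑ y, p x y z) * Real.log (∑ y, p x y z))
      + ∑ y, ∑ z, (∑ x, p x y z) * Real.log (∑ x, p x y z) := by
  have key : ∀ x y z,
      p x y z * Real.log (p x y z)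
        + p x y z * Real.log (∑ x', ∑ y', p x' y' z)
      = p x y z * Real.log (∑ y', p x y' z)
        + p x y z * Real.log (∑ x', p x' y z) := by
    intro x y z
    rcases eq_or_lt_of_le (hp x y z) with h0 | h0
    · simp [← h0]
    · have hA : 0 < ∑ y', p x y' z :=
        lt_of_lt_of_le h0 (Finset.single_le_sum (fun i _ => hp x i z) (Finset.mem_univ y))
      have hC : 0 < ∑ x', ∑ y', p x' y' z :=
        lt_of_lt_of_le hA (Finset.single_le_sum
          (fun i _ => Finset.sum_nonneg fun j _ => hp i j z) (Finset.mem_univ x))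
      have hB : 0 < ∑ x', p x' y z := by
        by_contra hB
        push_neg at hB
        have : ∑ x', p x' y z = 0 :=
          le_antisymm hB (Finset.sum_nonneg fun i _ => hp i y z)
        have := hm x y z
        rw [this] at *
        nlinarith [hm x y z]
      have hlog : Real.log (p x y z) + Real.log (∑ x', ∑ y', p x' y' z)
          = Real.log (∑ y', p x y' z) + Real.log (∑ x', p x' y z) := by
        rw [← Real.log_mul (ne_of_gt h0) (ne_of_gt hC),
            ← Real.log_mul (ne_of_gt hA) (ne_of_gt hB), hm x y z]
      nlinarith [hlog]
  have e1 : (∑ x, ∑ z, (∑ y, p x y z) * Real.log (∑ y, p x y z))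
      = ∑ x, ∑ y, ∑ z, p x y z * Real.log (∑ y', p x y' z) := by
    refine Finset.sum_congr rfl fun x _ => ?_
    rw [Finset.sum_comm]
    refine Finset.sum_congr rfl fun z _ => ?_
    rw [Finset.sum_mul]
  have e2 : (∑ y, ∑ z, (∑ x, p x y z) * Real.log (∑ x, p x y z))
      = ∑ x, ∑ y, ∑ z, p x y z * Real.log (∑ x', p x' y z) := by
    have h1 : ∀ y z, (∑ x, p x y z) * Real.log (∑ x, p x y z)
        = ∑ x, p x y z * Real.log (∑ x', p x' y z) := fun y z => Finset.sum_mul ..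
    calc (∑ y, ∑ z, (∑ x, p x y z) * Real.log (∑ x, p x y z))
        = ∑ y, ∑ z, ∑ x, p x y z * Real.log (∑ x', p x' y z) := by
          exact Finset.sum_congr rfl fun y _ => Finset.sum_congr rfl fun z _ => h1 y z
      _ = ∑ y, ∑ x, ∑ z, p x y z * Real.log (∑ x', p x' y z) :=
          Finset.sum_congr rfl fun y _ => Finset.sum_comm
      _ = ∑ x, ∑ y, ∑ z, p x y z * Real.log (∑ x', p x' y z) := Finset.sum_comm
  have e3 : (∑ z, (∑ x, ∑ y, p x y z) * Real.log (∑ x, ∑ y, p x y z))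
      = ∑ x, ∑ y, ∑ z, p x y z * Real.log (∑ x', ∑ y', p x' y' z) := by
    have h1 : ∀ z, (∑ x, ∑ y, p x y z) * Real.log (∑ x, ∑ y, p x y z)
        = ∑ x, ∑ y, p x y z * Real.log (∑ x', ∑ y', p x' y' z) := by
      intro z
      rw [Finset.sum_mul]
      exact Finset.sum_congr rfl fun x _ => Finset.sum_mul ..
    calc (∑ z, (∑ x, ∑ y, p x y z) * Real.log (∑ x, ∑ y, p x y z))
        = ∑ z, ∑ x, ∑ y, p x y z * Real.log (∑ x', ∑ y', p x' y' z) :=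
          Finset.sum_congr rfl fun z _ => h1 z
      _ = ∑ x, ∑ z, ∑ y, p x y z * Real.log (∑ x', ∑ y', p x' y' z) := Finset.sum_comm
      _ = ∑ x, ∑ y, ∑ z, p x y z * Real.log (∑ x', ∑ y', p x' y' z) :=
          Finset.sum_congr rfl fun x _ => Finset.sum_comm
  rw [e1, e2, e3]
  simp only [← Finset.sum_add_distrib]
  exact Finset.sum_congr rfl fun x _ => Finset.sum_congr rfl fun y _ =>
    Finset.sum_congr rfl fun z _ => key x y z

/-- Chain-rule identity: `I(X;Y) + I(X;Z|Y) = I(X;Z) + I(X;Y|Z)`. -/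
lemma chain_identity {Ω α β γ : Type*} [MeasurableSpace Ω]
    [Fintype α] [Fintype β] [Fintype γ]
    (μ : Measure Ω) (X : Ω → α) (Y : Ω → β) (Z : Ω → γ) :
    mutInfo μ X Y + condMutInfo μ X Z Y = mutInfo μ X Z + condMutInfo μ X Y Z := by
  unfold mutInfo condMutInfo
  have h1 : Hent μ (fun ω => (Z ω, Y ω)) = Hent μ (fun ω => (Y ω, Z ω)) := by
    simpa using Hent_map_equiv μ (fun ω => (Y ω, Z ω)) (Equiv.prodComm β γ)
  have h2 : Hent μ (fun ω => ((X ω, Z ω), Y ω)) = Hent μ (fun ω => ((X ω, Y ω), Z ω)) := by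
    let e : (α × β) × γ ≃ (α × γ) × β :=
      { toFun := fun p => ((p.1.1, p.2), p.1.2)
        invFun := fun p => ((p.1.1, p.2), p.1.2)
        left_inv := fun p => rfl
        right_inv := fun p => rfl }
    exact Hent_map_equiv μ (fun ω => ((X ω, Y ω), Z ω)) e
  rw [h1, h2]
  ring

lemma condMutInfo_eq_zero_of_condIndep {Ω α β γ : Type*} [MeasurableSpace Ω]
    [MeasurableSpace α] [MeasurableSingletonClass α] [Fintype α]
    [MeasurableSpace β] [MeasurableSingletonClass β] [Fintype β]
    [MeasurableSpace γ] [MeasurableSingletonClass γ] [Fintype γ]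
    (μ : Measure Ω) [IsFiniteMeasure μ] (X : Ω → α) (Y : Ω → β) (Z : Ω → γ)
    (hX : Measurable X) (hY : Measurable Y) (hZ : Measurable Z)
    (h : CondIndepFin μ X Y Z) : condMutInfo μ X Y Z = 0 := by
  classical
  set p : α → β → γ → ℝ :=
    fun x y z => (μ (X ⁻¹' {x} ∩ Y ⁻¹' {y} ∩ Z ⁻¹' {z})).toReal with hpdef
  have hp : ∀ x y z, 0 ≤ p x y z := fun _ _ _ => ENNReal.toReal_nonneg
  have hXZm : ∀ (x : α) (z : γ),
      μ (X ⁻¹' {x} ∩ Z ⁻¹' {z}) = ∑ y : β, μ (X ⁻¹' {x} ∩ Y ⁻¹' {y} ∩ Z ⁻¹' {z}) := by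
    intro x z
    have h1 := measure_fiber_sum μ Y hY (X ⁻¹' {x} ∩ Z ⁻¹' {z})
      ((hX (measurableSet_singleton x)).inter (hZ (measurableSet_singleton z))) Finset.univ
    simp only [Finset.coe_univ, Set.preimage_univ, Set.univ_inter] at h1
    rw [h1]
    refine Finset.sum_congr rfl fun y _ => ?_
    congr 1
    ext ω; simp; tauto
  have hYZm : ∀ (y : β) (z : γ),
      μ (Y ⁻¹' {y} ∩ Z ⁻¹' {z}) = ∑ x : α, μ (X ⁻¹' {x} ∩ Y ⁻¹' {y} ∩ Z ⁻¹' {z}) := by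
    intro y z
    have h1 := measure_fiber_sum μ X hX (Y ⁻¹' {y} ∩ Z ⁻¹' {z})
      ((hY (measurableSet_singleton y)).inter (hZ (measurableSet_singleton z))) Finset.univ
    simp only [Finset.coe_univ, Set.preimage_univ, Set.univ_inter] at h1
    rw [h1]
    refine Finset.sum_congr rfl fun x _ => ?_
    congr 1
    ext ω; simp; tauto
  have hZm : ∀ (z : γ),
      μ (Z ⁻¹' {z}) = ∑ x : α, ∑ y : β, μ (X ⁻¹' {x} ∩ Y ⁻¹' {y} ∩ Z ⁻¹' {z}) := by
    intro z
    have h1 := measure_fiber_sum μ X hX (Z ⁻¹' {z})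
      (hZ (measurableSet_singleton z)) Finset.univ
    simp only [Finset.coe_univ, Set.preimage_univ, Set.univ_inter] at h1
    rw [h1]
    exact Finset.sum_congr rfl fun x _ => hXZm x z
  have hXZ : ∀ (x : α) (z : γ),
      (μ (X ⁻¹' {x} ∩ Z ⁻¹' {z})).toReal = ∑ y, p x y z := by
    intro x z
    rw [hXZm x z, ENNReal.toReal_sum fun y _ => measure_ne_top μ _]
  have hYZ : ∀ (y : β) (z : γ),
      (μ (Y ⁻¹' {y} ∩ Z ⁻¹' {z})).toReal = ∑ x, p x y z := by
    intro y z
    rw [hYZm y z, ENNReal.toReal_sum fun x _ => measure_ne_top μ _]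
  have hZr : ∀ (z : γ), (μ (Z ⁻¹' {z})).toReal = ∑ x, ∑ y, p x y z := by
    intro z
    rw [hZm z, ENNReal.toReal_sum fun x _ =>
      ENNReal.sum_ne_top.mpr fun y _ => measure_ne_top μ _]
    exact Finset.sum_congr rfl fun x _ =>
      ENNReal.toReal_sum fun y _ => measure_ne_top μ _
  have hmr : ∀ x y z, p x y z * (∑ x', ∑ y', p x' y' z)
      = (∑ y', p x y' z) * (∑ x', p x' y z) := by
    intro x y z
    have := congrArg ENNReal.toReal (h x y z)
    rw [ENNReal.toReal_mul, ENNReal.toReal_mul] at this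
    rw [← hZr z, ← hXZ x z, ← hYZ y z]
    exact this
  have hs1 : ∀ (x : α) (z : γ),
      (fun ω => (X ω, Z ω)) ⁻¹' {(x, z)} = X ⁻¹' {x} ∩ Z ⁻¹' {z} := by
    intro x z; ext ω; simp [Prod.ext_iff]
  have hs2 : ∀ (y : β) (z : γ),
      (fun ω => (Y ω, Z ω)) ⁻¹' {(y, z)} = Y ⁻¹' {y} ∩ Z ⁻¹' {z} := by
    intro y z; ext ω; simp [Prod.ext_iff]
  have hs3 : ∀ (x : α) (y : β) (z : γ),
      (fun ω => ((X ω, Y ω), Z ω)) ⁻¹' {((x, y), z)}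
        = X ⁻¹' {x} ∩ Y ⁻¹' {y} ∩ Z ⁻¹' {z} := by
    intro x y z; ext ω; simp [Prod.ext_iff, and_assoc]
  have main := sum_log_identity p hp hmr
  unfold condMutInfo Hent
  simp only [Fintype.sum_prod_type, hs1, hs2, hs3, hXZ, hYZ, hZr]
  simp only [hpdef] at main ⊢
  linarith [main]

lemma CondIndepFin.comp_left {Ω α β γ δ : Type*} [MeasurableSpace Ω]
    [MeasurableSpace α] [MeasurableSingletonClass α] [Fintype α]
    [MeasurableSpace β] [MeasurableSingletonClass β]
    [MeasurableSpace γ] [MeasurableSingletonClass γ]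
    (μ : Measure Ω) (X : Ω → α) (Y : Ω → β) (Z : Ω → γ) (f : α → δ)
    (hX : Measurable X) (hY : Measurable Y) (hZ : Measurable Z)
    (h : CondIndepFin μ X Y Z) :
    CondIndepFin μ (fun ω => f (X ω)) Y Z := by
  classical
  intro d y z
  have key : ∀ (S : Set Ω), MeasurableSet S →
      μ ((fun ω => f (X ω)) ⁻¹' {d} ∩ S)
        = ∑ a ∈ Finset.univ.filter (fun a => f a = d), μ (X ⁻¹' {a} ∩ S) := by
    intro S hS
    have hseteq : (fun ω => f (X ω)) ⁻¹' {d}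
        = X ⁻¹' ((Finset.univ.filter (fun a => f a = d) : Finset α) : Set α) := by
      ext ω; simp
    rw [hseteq, measure_fiber_sum μ X hX S hS]
  have hset2 : ∀ a : α, X ⁻¹' {a} ∩ (Y ⁻¹' {y} ∩ Z ⁻¹' {z})
      = X ⁻¹' {a} ∩ Y ⁻¹' {y} ∩ Z ⁻¹' {z} := fun a => (Set.inter_assoc _ _ _).symm
  rw [Set.inter_assoc,
      key _ ((hY (measurableSet_singleton y)).inter (hZ (measurableSet_singleton z))),
      key _ (hZ (measurableSet_singleton z)),
      Finset.sum_mul, Finset.sum_mul]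
  refine Finset.sum_congr rfl fun a _ => ?_
  rw [hset2 a]
  exact h a y z

/-- If `X¹ ⫫ X² | Y`, `Z = f ∘ X¹`, and `I(Z;X²) = I(X¹;X²)`, then
`I(Z;Y) = I(X¹;Y) − I(X¹;Y | X²) + I(Z;Y | X²)`. -/
theorem markov_sufficient_label_identity
    {Ω A B C D : Type*} [MeasurableSpace Ω]
    [MeasurableSpace A] [MeasurableSingletonClass A] [Fintype A]
    [MeasurableSpace B] [MeasurableSingletonClass B] [Fintype B]
    [MeasurableSpace C] [MeasurableSingletonClass C] [Fintype C]
    [MeasurableSpace D] [MeasurableSingletonClass D] [Fintype D]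
    (μ : Measure Ω) [IsProbabilityMeasure μ]
    (X1 : Ω → A) (X2 : Ω → B) (Y : Ω → C) (f : A → D)
    (hX1 : Measurable X1) (hX2 : Measurable X2) (hY : Measurable Y)
    (hMarkov : CondIndepFin μ X1 X2 Y)
    (hsuff : mutInfo μ (fun ω => f (X1 ω)) X2 = mutInfo μ X1 X2) :
    mutInfo μ (fun ω => f (X1 ω)) Y
      = mutInfo μ X1 Y - condMutInfo μ X1 Y X2
        + condMutInfo μ (fun ω => f (X1 ω)) Y X2 := by
  have hfX1 : Measurable (fun ω => f (X1 ω)) := (measurable_of_countable f).comp hX1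
  have hM2 : CondIndepFin μ (fun ω => f (X1 ω)) X2 Y :=
    CondIndepFin.comp_left μ X1 X2 Y f hX1 hX2 hY hMarkov
  have c1 := chain_identity μ X1 Y X2
  have c2 := chain_identity μ (fun ω => f (X1 ω)) Y X2
  have z1 := condMutInfo_eq_zero_of_condIndep μ X1 X2 Y hX1 hX2 hY hMarkov
  have z2 := condMutInfo_eq_zero_of_condIndep μ (fun ω => f (X1 ω)) X2 Y hfX1 hX2 hY hM2
  linarith
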